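/- Every closed surface admits infinitely many roots: for each closed surface S and each n there is a root of S (a triangulation with no applicable inverse T-move) with more than n vertices. -/

import Mathlib

namespace Tri

/-- A (pure 2-dimensional) simplicial complex, given by its set of triangles
(each triangle is a 3-element finset of vertex labels). -/
abbrev Complex := Finset (Finset ℕ)

/-- The vertices of a complex. -/
def vertices (K : Complex) : Finset ℕ := K.biUnion id

/-- The edges of a complex: 2-element subsets of triangles. -/
def edges (K : Complex) : Finset (Finset ℕ) := K.biUnion fun t => t.powersetCard 2

/-- The valence of a vertex: the number of triangles containing it. -/
def valence (K : Complex) (v : ℕ) : ℕ := (K.filter (fun t => v ∈ t)).card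

/-- The maximal vertex-valence of a complex. -/
def mv (K : Complex) : ℕ := (vertices K).sup (valence K)

/-- Euler characteristic V - E + T. -/
def eulerChar (K : Complex) : ℤ :=
  ((vertices K).card : ℤ) - (edges K).card + K.card

/-- Two triangles of `K` both containing `v` and sharing an edge. -/
def adjAt (K : Complex) (v : ℕ) (t₁ t₂ : Finset ℕ) : Prop :=
  t₁ ∈ K ∧ t₂ ∈ K ∧ v ∈ t₁ ∧ v ∈ t₂ ∧ (t₁ ∩ t₂).card = 2

/-- Two triangles of `K` sharing an edge. -/
def adj (K : Complex) (t₁ t₂ : Finset ℕ) : Prop :=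
  t₁ ∈ K ∧ t₂ ∈ K ∧ (t₁ ∩ t₂).card = 2

/-- A triangulation of a connected compact surface, possibly with boundary:
every triangle has 3 vertices, every edge lies in at most two triangles,
the triangles around every vertex are connected via edges through that vertex
(so every vertex link is a path or a circle), and the complex is connected. -/
structure IsSurface (K : Complex) : Prop where
  nonempty : K.Nonempty
  card3 : ∀ t ∈ K, t.card = 3
  edge_le : ∀ e ∈ edges K, (K.filter (fun t => e ⊆ t)).card ≤ 2
  link_conn : ∀ v, ∀ t₁ ∈ K, ∀ t₂ ∈ K, v ∈ t₁ → v ∈ t₂ →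
    Relation.ReflTransGen (adjAt K v) t₁ t₂
  conn : ∀ t₁ ∈ K, ∀ t₂ ∈ K, Relation.ReflTransGen (adj K) t₁ t₂

/-- A triangulation of a closed (connected compact) surface: every edge lies
in exactly two triangles. -/
def IsClosedSurface (K : Complex) : Prop :=
  IsSurface K ∧ ∀ e ∈ edges K, (K.filter (fun t => e ⊆ t)).card = 2

/-- Boundary edges: edges lying in exactly one triangle. -/
def bdryEdges (K : Complex) : Finset (Finset ℕ) :=
  (edges K).filter (fun e => (K.filter (fun t => e ⊆ t)).card = 1)

/-- Boundary vertices. -/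
def bdryVertices (K : Complex) : Finset ℕ := (bdryEdges K).biUnion id

/-- Interior vertices. -/
def intVertices (K : Complex) : Finset ℕ := vertices K \ bdryVertices K

/-- A triangulated disc: a connected compact surface with nonempty boundary and
Euler characteristic 1. -/
def IsDisc (K : Complex) : Prop :=
  IsSurface K ∧ eulerChar K = 1 ∧ (bdryEdges K).Nonempty

/-- Two edges sharing a vertex. -/
def edgeAdj (E : Complex) (e₁ e₂ : Finset ℕ) : Prop :=
  e₁ ∈ E ∧ e₂ ∈ E ∧ (e₁ ∩ e₂).Nonempty

/-- A set of edges forming a triangulated circle. -/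
def IsCircle (E : Complex) : Prop :=
  E.Nonempty ∧ (∀ e ∈ E, e.card = 2) ∧
  (∀ v ∈ E.biUnion id, (E.filter (fun e => v ∈ e)).card = 2) ∧
  ∀ e₁ ∈ E, ∀ e₂ ∈ E, Relation.ReflTransGen (edgeAdj E) e₁ e₂

/-- Simplicial isomorphism (re-labeling). -/
def Iso (K₁ K₂ : Complex) : Prop :=
  ∃ f : ℕ → ℕ, Set.InjOn f (vertices K₁) ∧ K₁.image (Finset.image f) = K₂

/-- The boundary of the tetrahedron. -/
def tetra : Complex := {{1,2,3},{1,2,4},{1,3,4},{2,3,4}}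

/-- The boundary of the octahedron. -/
def octa : Complex := {{1,2,3},{1,2,4},{1,3,5},{1,4,5},{2,3,6},{2,4,6},{3,5,6},{4,5,6}}

/-- The vertices of the link of a vertex. -/
def linkV (K : Complex) (v : ℕ) : Finset ℕ :=
  ((K.filter (fun t => v ∈ t)).biUnion id).erase v

/-- The result of the inverse T-move removing the vertex `v`. -/
def invT (K : Complex) (v : ℕ) : Complex :=
  insert (linkV K v) (K.filter (fun t => v ∉ t))

/-- `K'` is obtained from `K` by an inverse T-move: a 3-valent vertex whose
link does not bound a triangle is removed. -/
def InvTStep (K K' : Complex) : Prop :=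
  ∃ v, valence K v = 3 ∧ linkV K v ∉ K ∧ K' = invT K v

/-- A root: a closed triangulated surface admitting no inverse T-move. -/
def IsRoot (K : Complex) : Prop := IsClosedSurface K ∧ ∀ K', ¬ InvTStep K K'

/-- `R` is a root of `K`: obtained from `K` by inverse T-moves, with no
further inverse T-move applicable. -/
def IsRootOf (R K : Complex) : Prop :=
  Relation.ReflTransGen InvTStep K R ∧ ∀ R', ¬ InvTStep R R'

/-- The directed edges of an ordered triangle. -/
def dedges (p : ℕ × ℕ × ℕ) : Finset (ℕ × ℕ) := {(p.1, p.2.1), (p.2.1, p.2.2), (p.2.2, p.1)}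

/-- Orientability: a coherent choice of cyclic orders on the triangles,
i.e. no directed edge is shared by two distinct triangles. -/
def Orientable (K : Complex) : Prop :=
  ∃ o : Finset ℕ → ℕ × ℕ × ℕ,
    (∀ t ∈ K, ({(o t).1, (o t).2.1, (o t).2.2} : Finset ℕ) = t) ∧
    ∀ t₁ ∈ K, ∀ t₂ ∈ K, t₁ ≠ t₂ → ∀ p ∈ dedges (o t₁), p ∉ dedges (o t₂)

/-- Two closed triangulated surfaces triangulate the same surface iff they
have the same Euler characteristic and the same orientability. -/
def SameSurface (K₁ K₂ : Complex) : Prop :=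
  eulerChar K₁ = eulerChar K₂ ∧ (Orientable K₁ ↔ Orientable K₂)

/-- The intersection of two subcomplexes is a triangulated circle or empty. -/
def CircleInter (A B : Complex) : Prop :=
  (IsCircle (edges A ∩ edges B) ∨ edges A ∩ edges B = ∅) ∧
  vertices A ∩ vertices B = (edges A ∩ edges B).biUnion id

/-- A decomposition `(G, D, Ds)` of a closed triangulated surface `K`. -/
structure IsDecomp (K G D : Complex) (Ds : Finset Complex) : Prop where
  closed : IsClosedSurface K
  subG : G ⊆ K
  subD : D ⊆ K
  subDs : ∀ Di ∈ Ds, Di ⊆ K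
  surfG : IsSurface G
  discD : IsDisc D
  discDs : ∀ Di ∈ Ds, IsDisc Di
  maxv : ∃ v ∈ intVertices D, valence K v = mv K
  cover : G ∪ D ∪ Ds.sup id = K
  disjGD : Disjoint G D
  disjGDs : ∀ Di ∈ Ds, Disjoint G Di
  disjDDs : ∀ Di ∈ Ds, Disjoint D Di
  disjDsDs : ∀ Di ∈ Ds, ∀ Dj ∈ Ds, Di ≠ Dj → Disjoint Di Dj
  interGD : CircleInter G D
  interGDs : ∀ Di ∈ Ds, CircleInter G Di
  interDDs : ∀ Di ∈ Ds, CircleInter D Di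
  interDsDs : ∀ Di ∈ Ds, ∀ Dj ∈ Ds, Di ≠ Dj → CircleInter Di Dj

/-- A minimal decomposition: the genus-surface has the fewest triangles. -/
def IsMinDecomp (K G D : Complex) (Ds : Finset Complex) : Prop :=
  IsDecomp K G D Ds ∧ ∀ G' D' Ds', IsDecomp K G' D' Ds' → G.card ≤ G'.card

section Bary

def l0 (v : ℕ) : ℕ := Nat.pair 0 v
def l1 (e : Finset ℕ) : ℕ := Nat.pair 1 (Encodable.encode e)
def l2 (t : Finset ℕ) : ℕ := Nat.pair 2 (Encodable.encode t)

lemma l0_inj : Function.Injective l0 := by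
  intro a b h; simpa [l0, Nat.pair_eq_pair] using h
lemma l1_inj : Function.Injective l1 := by
  intro a b h; simpa [l1, Nat.pair_eq_pair] using h
lemma l2_inj : Function.Injective l2 := by
  intro a b h; simpa [l2, Nat.pair_eq_pair] using h
lemma l0_ne_l1 (v : ℕ) (e : Finset ℕ) : l0 v ≠ l1 e := by
  simp [l0, l1, Nat.pair_eq_pair]
lemma l0_ne_l2 (v : ℕ) (t : Finset ℕ) : l0 v ≠ l2 t := by
  simp [l0, l2, Nat.pair_eq_pair]
lemma l1_ne_l2 (e t : Finset ℕ) : l1 e ≠ l2 t := by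
  simp [l1, l2, Nat.pair_eq_pair]

/-- small triangle of barycentric subdivision -/
def S (v w : ℕ) (t : Finset ℕ) : Finset ℕ := {l0 v, l1 {v, w}, l2 t}

/-- barycentric subdivision -/
def B (K : Complex) : Complex :=
  K.biUnion fun t => t.biUnion fun v => (t.erase v).image fun w => S v w t

lemma mem_S {x v w t} : x ∈ S v w t ↔ x = l0 v ∨ x = l1 {v, w} ∨ x = l2 t := by
  simp [S]

lemma mem_B {K : Complex} {s} :
    s ∈ B K ↔ ∃ t ∈ K, ∃ v ∈ t, ∃ w ∈ t, w ≠ v ∧ s = S v w t := by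
  simp only [B, Finset.mem_biUnion, Finset.mem_image, Finset.mem_erase]
  constructor
  · rintro ⟨t, ht, v, hv, w, ⟨hwv, hw⟩, rfl⟩
    exact ⟨t, ht, v, hv, w, hw, hwv, rfl⟩
  · rintro ⟨t, ht, v, hv, w, hw, hwv, rfl⟩
    exact ⟨t, ht, v, hv, w, ⟨hwv, hw⟩, rfl⟩

lemma pair_eq {a b c d : ℕ} (hab : a ≠ b) (h : ({a, b} : Finset ℕ) = {c, d}) :
    (a = c ∧ b = d) ∨ (a = d ∧ b = c) := by
  have ha : a ∈ ({c, d} : Finset ℕ) := h ▸ (by simp)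
  have hb : b ∈ ({c, d} : Finset ℕ) := h ▸ (by simp)
  have hc : c ∈ ({a, b} : Finset ℕ) := h ▸ (by simp)
  have hd : d ∈ ({a, b} : Finset ℕ) := h ▸ (by simp)
  simp only [Finset.mem_insert, Finset.mem_singleton] at ha hb hc hd
  rcases ha with rfl | rfl <;> rcases hb with rfl | rfl <;> tauto

lemma S_card (v w : ℕ) (t : Finset ℕ) : (S v w t).card = 3 := by
  rw [S, Finset.card_insert_of_notMem, Finset.card_insert_of_notMem] <;>
    simp [l0_ne_l1, l0_ne_l2, l1_ne_l2]

lemma S_eq {v w t v' w' t'} (hw : w ≠ v) (hw' : w' ≠ v') :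
    S v w t = S v' w' t' ↔ v = v' ∧ w = w' ∧ t = t' := by
  constructor
  · intro h
    have h0 : l0 v ∈ S v' w' t' := h ▸ (by simp [mem_S])
    have h1 : l1 ({v, w} : Finset ℕ) ∈ S v' w' t' := h ▸ (by simp [mem_S])
    have h2 : l2 t ∈ S v' w' t' := h ▸ (by simp [mem_S])
    rw [mem_S] at h0 h1 h2
    have hv : v = v' := by
      rcases h0 with h | h | h
      · exact l0_inj h
      · exact absurd h (l0_ne_l1 _ _)
      · exact absurd h (l0_ne_l2 _ _)
    have ht : t = t' := by
      rcases h2 with h | h | h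
      · exact absurd h.symm (l0_ne_l2 _ _)
      · exact absurd h.symm (l1_ne_l2 _ _)
      · exact l2_inj h
    refine ⟨hv, ?_, ht⟩
    rcases h1 with h | h | h
    · exact absurd h.symm (l0_ne_l1 _ _)
    · have he := l1_inj h
      rcases pair_eq (Ne.symm hw) he with ⟨_, rfl⟩ | ⟨h1, h2⟩
      · rfl
      · exact absurd (hv.symm.trans h1) (Ne.symm hw')
    · exact absurd h (l1_ne_l2 _ _)
  · rintro ⟨rfl, rfl, rfl⟩; rfl

lemma S_mem_B {K : Complex} {v w t} (ht : t ∈ K) (hv : v ∈ t) (hw : w ∈ t) (hwv : w ≠ v) :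
    S v w t ∈ B K := mem_B.2 ⟨t, ht, v, hv, w, hw, hwv, rfl⟩
lemma l1_ne_of_ne {v w w' : ℕ} (hw : w ≠ v) (hw' : w' ≠ v) (hne : w ≠ w') :
    l1 ({v, w} : Finset ℕ) ≠ l1 {v, w'} := fun h => by
  rcases pair_eq (Ne.symm hw) (l1_inj h) with ⟨_, h2⟩ | ⟨h1, _⟩
  · exact hne h2
  · exact hw' h1.symm

lemma S_inter_vt {v w w' : ℕ} {t : Finset ℕ} (hw : w ≠ v) (hw' : w' ≠ v) (hne : w ≠ w') :
    S v w t ∩ S v w' t = {l0 v, l2 t} := by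
  have hl := l1_ne_of_ne hw hw' hne
  ext x
  simp only [Finset.mem_inter, mem_S, Finset.mem_insert, Finset.mem_singleton]
  constructor
  · rintro ⟨h | h | h, h' | h' | h'⟩ <;> subst h <;>
      first
      | exact Or.inl rfl
      | exact Or.inr rfl
      | exact absurd h' hl
      | exact absurd h' (l0_ne_l1 _ _)
      | exact absurd h' (l0_ne_l2 _ _)
      | exact absurd h' (l1_ne_l2 _ _)
      | exact absurd h'.symm (l0_ne_l1 _ _)
      | exact absurd h'.symm (l0_ne_l2 _ _)
      | exact absurd h'.symm (l1_ne_l2 _ _)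
      | exact absurd h'.symm hl
  · rintro (rfl | rfl) <;> simp

lemma S_inter_et {v w : ℕ} {t : Finset ℕ} (hvw : v ≠ w) :
    S v w t ∩ S w v t = {l1 {v, w}, l2 t} := by
  have hp : ({w, v} : Finset ℕ) = {v, w} := Finset.pair_comm w v
  ext x
  simp only [Finset.mem_inter, mem_S, hp, Finset.mem_insert, Finset.mem_singleton]
  constructor
  · rintro ⟨h | h | h, h' | h' | h'⟩ <;> subst h <;>
      first
      | exact Or.inl rfl
      | exact Or.inr rfl
      | exact absurd (l0_inj h') hvw
      | exact absurd h' (l0_ne_l1 _ _)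
      | exact absurd h' (l0_ne_l2 _ _)
      | exact absurd h' (l1_ne_l2 _ _)
      | exact absurd h'.symm (l0_ne_l1 _ _)
      | exact absurd h'.symm (l0_ne_l2 _ _)
      | exact absurd h'.symm (l1_ne_l2 _ _)
  · rintro (rfl | rfl) <;> simp

lemma S_inter_ve {v w : ℕ} {t t' : Finset ℕ} (hne : t ≠ t') :
    S v w t ∩ S v w t' = {l0 v, l1 {v, w}} := by
  have hl : l2 t ≠ l2 t' := fun h => hne (l2_inj h)
  ext x
  simp only [Finset.mem_inter, mem_S, Finset.mem_insert, Finset.mem_singleton]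
  constructor
  · rintro ⟨h | h | h, h' | h' | h'⟩ <;> subst h <;>
      first
      | exact Or.inl rfl
      | exact Or.inr rfl
      | exact absurd h' hl
      | exact absurd h' (l0_ne_l1 _ _)
      | exact absurd h' (l0_ne_l2 _ _)
      | exact absurd h' (l1_ne_l2 _ _)
      | exact absurd h'.symm (l0_ne_l1 _ _)
      | exact absurd h'.symm (l0_ne_l2 _ _)
      | exact absurd h'.symm (l1_ne_l2 _ _)
  · rintro (rfl | rfl) <;> simp

lemma pair_sub_triple {x y z : ℕ} {s : Finset ℕ} (h : s ⊆ {x, y, z}) (hc : s.card = 2) :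
    s = {x, y} ∨ s = {x, z} ∨ s = {y, z} := by
  obtain ⟨a, b, hab, rfl⟩ := Finset.card_eq_two.1 hc
  have ha : a ∈ ({x, y, z} : Finset ℕ) := h (by simp)
  have hb : b ∈ ({x, y, z} : Finset ℕ) := h (by simp)
  simp only [Finset.mem_insert, Finset.mem_singleton] at ha hb
  rcases ha with rfl | rfl | rfl <;> rcases hb with rfl | rfl | rfl <;>
    simp_all [Finset.pair_comm] <;> tauto

lemma triple_distinct {a b c : ℕ} (h : ({a, b, c} : Finset ℕ).card = 3) :
    a ≠ b ∧ a ≠ c ∧ b ≠ c := by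
  refine ⟨?_, ?_, ?_⟩ <;> rintro rfl
  · rw [Finset.insert_idem] at h
    have h2 := Finset.card_insert_le a ({c} : Finset ℕ)
    simp at h2; omega
  · rw [Finset.insert_comm, Finset.pair_eq_singleton] at h
    have h2 := Finset.card_insert_le b ({a} : Finset ℕ)
    simp at h2; omega
  · rw [Finset.pair_eq_singleton] at h
    have h2 := Finset.card_insert_le a ({b} : Finset ℕ)
    simp at h2; omega

lemma mem_edges {K : Complex} {e : Finset ℕ} :
    e ∈ edges K ↔ ∃ t ∈ K, e ⊆ t ∧ e.card = 2 := by
  simp [edges, Finset.mem_powersetCard]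

lemma edge_mem {K : Complex} {t : Finset ℕ} {a b : ℕ} (ht : t ∈ K) (ha : a ∈ t) (hb : b ∈ t)
    (hne : a ≠ b) : ({a, b} : Finset ℕ) ∈ edges K := by
  refine mem_edges.2 ⟨t, ht, ?_, Finset.card_pair hne⟩
  intro x hx
  simp only [Finset.mem_insert, Finset.mem_singleton] at hx
  rcases hx with rfl | rfl <;> assumption

lemma tri_decomp {K : Complex} (hK : IsSurface K) {t : Finset ℕ} (ht : t ∈ K) :
    ∃ a b c, a ≠ b ∧ a ≠ c ∧ b ≠ c ∧ t = {a, b, c} := by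
  obtain ⟨a, b, c, h1, h2, h3, h4⟩ := Finset.card_eq_three.1 (hK.card3 t ht)
  exact ⟨a, b, c, h1, h2, h3, h4⟩

lemma erase_card2 {K : Complex} (hK : IsSurface K) {t : Finset ℕ} (ht : t ∈ K) {v : ℕ}
    (hv : v ∈ t) : (t.erase v).card = 2 := by
  rw [Finset.card_erase_of_mem hv, hK.card3 t ht]

/-- the third vertex of a triangle -/
lemma third_vertex {K : Complex} (hK : IsSurface K) {t : Finset ℕ} (ht : t ∈ K) {v w : ℕ}
    (hv : v ∈ t) (hw : w ∈ t) (hne : w ≠ v) :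
    ∃ u, u ∈ t ∧ u ≠ v ∧ u ≠ w ∧ t = {v, w, u} := by
  obtain ⟨a, b, hab, he⟩ := Finset.card_eq_two.1 (erase_card2 hK ht hv)
  have hva : v ∉ t.erase v := Finset.notMem_erase v t
  have hw' : w ∈ t.erase v := Finset.mem_erase.2 ⟨hne, hw⟩
  rw [he] at hw' hva
  simp only [Finset.mem_insert, Finset.mem_singleton] at hw'
  have hins : t = insert v (t.erase v) := (Finset.insert_erase hv).symm
  rcases hw' with rfl | rfl
  · refine ⟨b, ?_, ?_, hab.symm, ?_⟩
    · have : b ∈ t.erase v := he ▸ (by simp)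
      exact Finset.mem_of_mem_erase this
    · intro hbv; apply hva; simp [hbv]
    · rw [hins, he]
  · refine ⟨a, ?_, ?_, hab, ?_⟩
    · have : a ∈ t.erase v := he ▸ (by simp)
      exact Finset.mem_of_mem_erase this
    · intro hav; apply hva; simp [hav]
    · rw [hins, he, Finset.pair_comm a w, Finset.insert_comm]

/-- every edge of a closed surface lies in two distinct triangles -/
lemma two_triangles {K : Complex} (hK : IsClosedSurface K) {e : Finset ℕ} (he : e ∈ edges K) :
    ∃ t₁ t₂, t₁ ≠ t₂ ∧ K.filter (fun t => e ⊆ t) = {t₁, t₂} := by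
  obtain ⟨t₁, t₂, h, he⟩ := Finset.card_eq_two.1 (hK.2 e he)
  exact ⟨t₁, t₂, h, he⟩

lemma valence_ge_two {K : Complex} (hK : IsClosedSurface K) {v : ℕ}
    (hv : v ∈ vertices K) : 2 ≤ valence K v := by
  obtain ⟨t, ht, hvt⟩ := Finset.mem_biUnion.1 hv
  obtain ⟨a, b, c, h1, h2, h3, rfl⟩ := tri_decomp hK.1 ht
  have hvm : v ∈ ({a, b, c} : Finset ℕ) := hvt
  -- pick another vertex u of t
  have : ∃ u ∈ ({a, b, c} : Finset ℕ), u ≠ v := by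
    simp only [Finset.mem_insert, Finset.mem_singleton] at hvm
    rcases hvm with rfl | rfl | rfl
    · exact ⟨b, by simp, h1.symm⟩
    · exact ⟨a, by simp, h1⟩
    · exact ⟨a, by simp, h2⟩
  obtain ⟨u, hu, huv⟩ := this
  have he : ({v, u} : Finset ℕ) ∈ edges K := edge_mem ht hvt hu huv.symm
  obtain ⟨t₁, t₂, hne, hf⟩ := two_triangles hK he
  have h₁ : t₁ ∈ K.filter (fun t => v ∈ t) := by
    have : t₁ ∈ K.filter (fun t => ({v, u} : Finset ℕ) ⊆ t) := hf ▸ (by simp)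
    simp only [Finset.mem_filter] at this ⊢
    exact ⟨this.1, this.2 (by simp)⟩
  have h₂ : t₂ ∈ K.filter (fun t => v ∈ t) := by
    have : t₂ ∈ K.filter (fun t => ({v, u} : Finset ℕ) ⊆ t) := hf ▸ (by simp)
    simp only [Finset.mem_filter] at this ⊢
    exact ⟨this.1, this.2 (by simp)⟩
  have : ({t₁, t₂} : Finset (Finset ℕ)) ⊆ K.filter (fun t => v ∈ t) := by
    intro x hx
    simp only [Finset.mem_insert, Finset.mem_singleton] at hx
    rcases hx with rfl | rfl <;> assumption
  calc 2 = ({t₁, t₂} : Finset (Finset ℕ)).card := (Finset.card_pair hne).symm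
    _ ≤ _ := Finset.card_le_card this

lemma B_card3 {K : Complex} {s : Finset ℕ} (hs : s ∈ B K) : s.card = 3 := by
  obtain ⟨t, _, v, _, w, _, _, rfl⟩ := mem_B.1 hs
  exact S_card v w t

lemma parse_l0 {K : Complex} {s : Finset ℕ} (hs : s ∈ B K) {v : ℕ} (hv : l0 v ∈ s) :
    ∃ t ∈ K, ∃ w ∈ t, w ≠ v ∧ v ∈ t ∧ s = S v w t := by
  obtain ⟨t, ht, v', hv', w, hw, hwv, rfl⟩ := mem_B.1 hs
  rcases mem_S.1 hv with h | h | h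
  · cases l0_inj h; exact ⟨t, ht, w, hw, hwv, hv', rfl⟩
  · exact absurd h (l0_ne_l1 _ _)
  · exact absurd h (l0_ne_l2 _ _)

lemma parse_l2 {K : Complex} {s : Finset ℕ} (hs : s ∈ B K) {t : Finset ℕ} (ht2 : l2 t ∈ s) :
    ∃ v ∈ t, ∃ w ∈ t, w ≠ v ∧ t ∈ K ∧ s = S v w t := by
  obtain ⟨t', ht', v, hv, w, hw, hwv, rfl⟩ := mem_B.1 hs
  rcases mem_S.1 ht2 with h | h | h
  · exact absurd h.symm (l0_ne_l2 _ _)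
  · exact absurd h.symm (l1_ne_l2 _ _)
  · cases l2_inj h; exact ⟨v, hv, w, hw, hwv, ht', rfl⟩

lemma parse_l1 {K : Complex} {s : Finset ℕ} (hs : s ∈ B K) {v w : ℕ} (hne : w ≠ v)
    (hv : l1 ({v, w} : Finset ℕ) ∈ s) :
    ∃ t ∈ K, v ∈ t ∧ w ∈ t ∧ (s = S v w t ∨ s = S w v t) := by
  obtain ⟨t, ht, v', hv', w', hw', hwv', rfl⟩ := mem_B.1 hs
  rcases mem_S.1 hv with h | h | h
  · exact absurd h.symm (l0_ne_l1 _ _)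
  · have := l1_inj h
    rcases pair_eq hne.symm this with ⟨rfl, rfl⟩ | ⟨rfl, rfl⟩
    · exact ⟨t, ht, hv', hw', Or.inl rfl⟩
    · exact ⟨t, ht, hw', hv', Or.inr rfl⟩
  · exact absurd h (l1_ne_l2 _ _)

lemma filterA {K : Complex} {v w : ℕ} (hne : w ≠ v) {t₁ t₂ : Finset ℕ}
    (hf : K.filter (fun t => ({v, w} : Finset ℕ) ⊆ t) = {t₁, t₂}) :
    (B K).filter (fun s => ({l0 v, l1 {v, w}} : Finset ℕ) ⊆ s) = {S v w t₁, S v w t₂} := by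
  ext s
  simp only [Finset.mem_filter, Finset.insert_subset_iff, Finset.singleton_subset_iff,
    Finset.mem_insert, Finset.mem_singleton]
  constructor
  · rintro ⟨hs, h0, h1⟩
    obtain ⟨t, ht, w', hw', hwv', hvt, rfl⟩ := parse_l0 hs h0
    rcases mem_S.1 h1 with h | h | h
    · exact absurd h.symm (l0_ne_l1 _ _)
    · have := l1_inj h.symm
      rcases pair_eq hne.symm this.symm with ⟨_, rfl⟩ | ⟨h1, h2⟩
      · have htm : t ∈ K.filter (fun t => ({v, w} : Finset ℕ) ⊆ t) := by
          simp only [Finset.mem_filter, Finset.insert_subset_iff,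
            Finset.singleton_subset_iff]
          exact ⟨ht, hvt, hw'⟩
        rw [hf] at htm
        simp only [Finset.mem_insert, Finset.mem_singleton] at htm
        rcases htm with rfl | rfl
        · exact Or.inl rfl
        · exact Or.inr rfl
      · exact absurd h1 (Ne.symm hwv')
    · exact absurd h (l1_ne_l2 _ _)
  · have key : ∀ t', t' ∈ K.filter (fun t => ({v, w} : Finset ℕ) ⊆ t) →
        S v w t' ∈ B K ∧ l0 v ∈ S v w t' ∧ l1 ({v, w} : Finset ℕ) ∈ S v w t' := by
      intro t' ht'
      simp only [Finset.mem_filter, Finset.insert_subset_iff,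
        Finset.singleton_subset_iff] at ht'
      exact ⟨S_mem_B ht'.1 ht'.2.1 ht'.2.2 hne, by simp [mem_S], by simp [mem_S]⟩
    rintro (rfl | rfl)
    · exact key t₁ (hf ▸ (by simp))
    · exact key t₂ (hf ▸ (by simp))

lemma filterB {K : Complex} (hK : IsSurface K) {v : ℕ} {t : Finset ℕ} (ht : t ∈ K)
    (hv : v ∈ t) {w₁ w₂ : ℕ} (he : t.erase v = {w₁, w₂}) :
    (B K).filter (fun s => ({l0 v, l2 t} : Finset ℕ) ⊆ s) = {S v w₁ t, S v w₂ t} := by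
  have hw₁ : w₁ ∈ t.erase v := he ▸ (by simp)
  have hw₂ : w₂ ∈ t.erase v := he ▸ (by simp)
  ext s
  simp only [Finset.mem_filter, Finset.insert_subset_iff, Finset.singleton_subset_iff,
    Finset.mem_insert, Finset.mem_singleton]
  constructor
  · rintro ⟨hs, h0, h2⟩
    obtain ⟨t', ht', w', hw', hwv', hvt', rfl⟩ := parse_l0 hs h0
    rcases mem_S.1 h2 with h | h | h
    · exact absurd h.symm (l0_ne_l2 _ _)
    · exact absurd h.symm (l1_ne_l2 _ _)
    · cases (l2_inj h).symm
      have : w' ∈ t.erase v := Finset.mem_erase.2 ⟨hwv', hw'⟩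
      rw [he] at this
      simp only [Finset.mem_insert, Finset.mem_singleton] at this
      rcases this with rfl | rfl
      · exact Or.inl rfl
      · exact Or.inr rfl
  · have key : ∀ w', w' ∈ t.erase v →
        S v w' t ∈ B K ∧ l0 v ∈ S v w' t ∧ l2 t ∈ S v w' t := by
      intro w' hw'
      obtain ⟨hne', hmem'⟩ := Finset.mem_erase.1 hw'
      exact ⟨S_mem_B ht hv hmem' hne', by simp [mem_S], by simp [mem_S]⟩
    rintro (rfl | rfl)
    · exact key w₁ hw₁
    · exact key w₂ hw₂

lemma filterC {K : Complex} {v w : ℕ} {t : Finset ℕ} (ht : t ∈ K) (hv : v ∈ t) (hw : w ∈ t)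
    (hne : w ≠ v) :
    (B K).filter (fun s => ({l1 {v, w}, l2 t} : Finset ℕ) ⊆ s) = {S v w t, S w v t} := by
  have hp : ({w, v} : Finset ℕ) = {v, w} := Finset.pair_comm w v
  ext s
  simp only [Finset.mem_filter, Finset.insert_subset_iff, Finset.singleton_subset_iff,
    Finset.mem_insert, Finset.mem_singleton]
  constructor
  · rintro ⟨hs, h1, h2⟩
    obtain ⟨v', hv', w', hw', hwv', ht', rfl⟩ := parse_l2 hs h2
    rcases mem_S.1 h1 with h | h | h
    · exact absurd h.symm (l0_ne_l1 _ _)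
    · rcases pair_eq (Ne.symm hne) (l1_inj h) with ⟨h1, h2⟩ | ⟨h1, h2⟩
      · exact Or.inl (by rw [← h1, ← h2])
      · exact Or.inr (by rw [← h1, ← h2])
    · exact absurd h (l1_ne_l2 _ _)
  · rintro (rfl | rfl)
    · exact ⟨S_mem_B ht hv hw hne, by simp [mem_S], by simp [mem_S]⟩
    · refine ⟨S_mem_B ht hw hv (Ne.symm hne), ?_, by simp [mem_S]⟩
      simp [mem_S, hp]

lemma B_edge_two {K : Complex} (hK : IsClosedSurface K) :
    ∀ e ∈ edges (B K), ((B K).filter (fun s => e ⊆ s)).card = 2 := by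
  intro e he
  obtain ⟨s, hs, hsub, hc⟩ := mem_edges.1 he
  obtain ⟨t, ht, v, hv, w, hw, hne, rfl⟩ := mem_B.1 hs
  rcases pair_sub_triple hsub hc with rfl | rfl | rfl
  · -- e = {l0 v, l1 {v,w}}
    have heK : ({v, w} : Finset ℕ) ∈ edges K := edge_mem ht hv hw (Ne.symm hne)
    obtain ⟨t₁, t₂, htne, hf⟩ := two_triangles hK heK
    rw [filterA hne hf]
    refine Finset.card_pair (fun hcon => htne ?_)
    exact ((S_eq hne hne).1 hcon).2.2
  · -- e = {l0 v, l2 t}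
    obtain ⟨w₁, w₂, hwne, herase⟩ := Finset.card_eq_two.1 (erase_card2 hK.1 ht hv)
    rw [filterB hK.1 ht hv herase]
    have hw₁ : w₁ ≠ v := (Finset.mem_erase.1 (herase ▸ (by simp : w₁ ∈ ({w₁, w₂} : Finset ℕ)))).1
    have hw₂ : w₂ ≠ v := (Finset.mem_erase.1 (herase ▸ (by simp : w₂ ∈ ({w₁, w₂} : Finset ℕ)))).1
    refine Finset.card_pair (fun hcon => hwne ?_)
    exact ((S_eq hw₁ hw₂).1 hcon).2.1
  · -- e = {l1 {v,w}, l2 t}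
    rw [filterC ht hv hw hne]
    refine Finset.card_pair (fun hcon => hne ?_)
    exact ((S_eq hne (Ne.symm hne)).1 hcon).2.1

lemma adjAt_of {K : Complex} {x : ℕ} {s₁ s₂ : Finset ℕ} (h1 : s₁ ∈ B K) (h2 : s₂ ∈ B K)
    (hx1 : x ∈ s₁) (hx2 : x ∈ s₂) (hcard : (s₁ ∩ s₂).card = 2) : adjAt (B K) x s₁ s₂ :=
  ⟨h1, h2, hx1, hx2, hcard⟩

/-- step between two small triangles of `t` at the same original vertex -/
lemma step_within {K : Complex} {t : Finset ℕ} (ht : t ∈ K) {v w w' : ℕ} (hv : v ∈ t)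
    (hw : w ∈ t) (hw' : w' ∈ t) (hne : w ≠ v) (hne' : w' ≠ v) {x : ℕ}
    (hx1 : x ∈ S v w t) (hx2 : x ∈ S v w' t) :
    Relation.ReflTransGen (adjAt (B K) x) (S v w t) (S v w' t) := by
  rcases eq_or_ne w w' with rfl | hww
  · exact Relation.ReflTransGen.refl
  · refine Relation.ReflTransGen.single (adjAt_of (S_mem_B ht hv hw hne)
      (S_mem_B ht hv hw' hne') hx1 hx2 ?_)
    rw [S_inter_vt hne hne' hww]
    exact Finset.card_pair (l0_ne_l2 _ _)

/-- flip step inside one triangle -/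
lemma step_flip {K : Complex} {t : Finset ℕ} (ht : t ∈ K) {v w : ℕ} (hv : v ∈ t)
    (hw : w ∈ t) (hne : w ≠ v) {x : ℕ} (hx1 : x ∈ S v w t) (hx2 : x ∈ S w v t) :
    adjAt (B K) x (S v w t) (S w v t) := by
  refine adjAt_of (S_mem_B ht hv hw hne) (S_mem_B ht hw hv (Ne.symm hne)) hx1 hx2 ?_
  rw [S_inter_et (Ne.symm hne)]
  exact Finset.card_pair (l1_ne_l2 _ _)

/-- step between corresponding small triangles of adjacent triangles -/
lemma step_cross {K : Complex} {t t' : Finset ℕ} (ht : t ∈ K) (ht' : t' ∈ K) {v w : ℕ}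
    (hv : v ∈ t) (hw : w ∈ t) (hv' : v ∈ t') (hw' : w ∈ t') (hne : w ≠ v) {x : ℕ}
    (hx1 : x ∈ S v w t) (hx2 : x ∈ S v w t') :
    Relation.ReflTransGen (adjAt (B K) x) (S v w t) (S v w t') := by
  rcases eq_or_ne t t' with rfl | htt
  · exact Relation.ReflTransGen.refl
  · refine Relation.ReflTransGen.single (adjAt_of (S_mem_B ht hv hw hne)
      (S_mem_B ht' hv' hw' hne) hx1 hx2 ?_)
    rw [S_inter_ve htt]
    exact Finset.card_pair (l0_ne_l1 _ _)

lemma l2_mem_S (v w : ℕ) (t : Finset ℕ) : l2 t ∈ S v w t := by simp [mem_S]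
lemma l0_mem_S (v w : ℕ) (t : Finset ℕ) : l0 v ∈ S v w t := by simp [mem_S]
lemma l1_mem_S (v w : ℕ) (t : Finset ℕ) : l1 ({v, w} : Finset ℕ) ∈ S v w t := by simp [mem_S]
lemma l1_mem_S' (v w : ℕ) (t : Finset ℕ) : l1 ({v, w} : Finset ℕ) ∈ S w v t := by
  simp [mem_S, Finset.pair_comm v w]

lemma linkB_l2 {K : Complex} {t : Finset ℕ} (ht : t ∈ K) {v w v' w' : ℕ} (hv : v ∈ t)
    (hw : w ∈ t) (hne : w ≠ v) (hv' : v' ∈ t) (hw' : w' ∈ t) (hne' : w' ≠ v') :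
    Relation.ReflTransGen (adjAt (B K) (l2 t)) (S v w t) (S v' w' t) := by
  rcases eq_or_ne v v' with rfl | hvv
  · exact step_within ht hv hw hw' hne hne' (l2_mem_S _ _ _) (l2_mem_S _ _ _)
  · have h1 := step_within (K := K) ht hv hw hv' hne (Ne.symm hvv)
      (l2_mem_S _ _ _) (l2_mem_S _ _ _)
    have h2 := Relation.ReflTransGen.single
      (step_flip (K := K) ht hv hv' (Ne.symm hvv) (l2_mem_S _ _ _) (l2_mem_S _ _ _))
    have h3 := step_within (K := K) ht hv' hv hw' hvv hne' (l2_mem_S _ _ _) (l2_mem_S _ _ _)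
    exact (h1.trans h2).trans h3

lemma pair_mem_of_inter_card_two {b c : Finset ℕ} {v : ℕ} (hv : v ∈ b ∩ c)
    (hcard : (b ∩ c).card = 2) : ∃ u, u ≠ v ∧ u ∈ b ∧ u ∈ c := by
  obtain ⟨x, y, hxy, hxyeq⟩ := Finset.card_eq_two.1 hcard
  rw [hxyeq] at hv
  simp only [Finset.mem_insert, Finset.mem_singleton] at hv
  have hx : x ∈ b ∩ c := hxyeq ▸ (by simp)
  have hy : y ∈ b ∩ c := hxyeq ▸ (by simp)
  rcases hv with rfl | rfl
  · exact ⟨y, hxy.symm, (Finset.mem_inter.1 hy).1, (Finset.mem_inter.1 hy).2⟩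
  · exact ⟨x, hxy, (Finset.mem_inter.1 hx).1, (Finset.mem_inter.1 hx).2⟩

lemma linkB_l0 {K : Complex} (hK : IsSurface K) {v w₁ w₂ : ℕ} {t₁ t₂ : Finset ℕ}
    (ht₁ : t₁ ∈ K) (hv₁ : v ∈ t₁) (hw₁ : w₁ ∈ t₁) (hne₁ : w₁ ≠ v)
    (ht₂ : t₂ ∈ K) (hv₂ : v ∈ t₂) (hw₂ : w₂ ∈ t₂) (hne₂ : w₂ ≠ v) :
    Relation.ReflTransGen (adjAt (B K) (l0 v)) (S v w₁ t₁) (S v w₂ t₂) := by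
  have hlink := hK.link_conn v t₁ ht₁ t₂ ht₂ hv₁ hv₂
  have main : ∀ t', Relation.ReflTransGen (adjAt K v) t₁ t' → t' ∈ K →
      ∀ w', w' ∈ t' → w' ≠ v →
      Relation.ReflTransGen (adjAt (B K) (l0 v)) (S v w₁ t₁) (S v w' t') := by
    intro t' hpath
    induction hpath with
    | refl =>
      intro _ w' hw' hne'
      exact step_within ht₁ hv₁ hw₁ hw' hne₁ hne' (l0_mem_S _ _ _) (l0_mem_S _ _ _)
    | tail hab hbc ih =>
      rename_i b c
      intro hc w' hw' hne'
      obtain ⟨hb, hcK, hvb, hvc, hcard⟩ := hbc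
      obtain ⟨u, huv, hub, huc⟩ := pair_mem_of_inter_card_two (Finset.mem_inter.2 ⟨hvb, hvc⟩) hcard
      have h1 := ih hb u hub huv
      have h2 := step_cross hb hcK hvb hub hvc huc huv (l0_mem_S _ _ _) (l0_mem_S _ _ _)
      have h3 := step_within (K := K) hcK hvc huc hw' huv hne' (l0_mem_S _ _ _) (l0_mem_S _ _ _)
      exact (h1.trans h2).trans h3
  exact main t₂ hlink ht₂ w₂ hw₂ hne₂

lemma linkB_l1 {K : Complex} {v w : ℕ} {t₁ t₂ : Finset ℕ} (ht₁ : t₁ ∈ K) (ht₂ : t₂ ∈ K)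
    (hv₁ : v ∈ t₁) (hw₁ : w ∈ t₁) (hv₂ : v ∈ t₂) (hw₂ : w ∈ t₂) (hne : w ≠ v) :
    Relation.ReflTransGen (adjAt (B K) (l1 {v, w})) (S v w t₁) (S v w t₂) :=
  step_cross ht₁ ht₂ hv₁ hw₁ hv₂ hw₂ hne (l1_mem_S _ _ _) (l1_mem_S _ _ _)

lemma B_link_conn {K : Complex} (hK : IsSurface K) :
    ∀ x, ∀ s₁ ∈ B K, ∀ s₂ ∈ B K, x ∈ s₁ → x ∈ s₂ →
      Relation.ReflTransGen (adjAt (B K) x) s₁ s₂ := by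
  intro x s₁ hs₁ s₂ hs₂ hx₁ hx₂
  obtain ⟨t, ht, v, hv, w, hw, hne, rfl⟩ := mem_B.1 hs₁
  rcases mem_S.1 hx₁ with rfl | rfl | rfl
  · -- x = l0 v
    obtain ⟨t₂, ht₂, w₂, hw₂, hne₂, hv₂, rfl⟩ := parse_l0 hs₂ hx₂
    exact linkB_l0 hK ht hv hw hne ht₂ hv₂ hw₂ hne₂
  · -- x = l1 {v, w}
    obtain ⟨t₂, ht₂, hv₂, hw₂, hor⟩ := parse_l1 hs₂ hne hx₂
    rcases hor with rfl | rfl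
    · exact linkB_l1 ht ht₂ hv hw hv₂ hw₂ hne
    · exact (linkB_l1 ht ht₂ hv hw hv₂ hw₂ hne).trans
        (Relation.ReflTransGen.single
          (step_flip ht₂ hv₂ hw₂ hne (l1_mem_S _ _ _) (l1_mem_S' _ _ _)))
  · -- x = l2 t
    obtain ⟨v₂, hv₂, w₂, hw₂, hne₂, _, rfl⟩ := parse_l2 hs₂ hx₂
    exact linkB_l2 ht hv hw hne hv₂ hw₂ hne₂

lemma B_conn {K : Complex} (hK : IsSurface K) :
    ∀ s₁ ∈ B K, ∀ s₂ ∈ B K, Relation.ReflTransGen (adj (B K)) s₁ s₂ := by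
  have weaken : ∀ x (s s' : Finset ℕ), adjAt (B K) x s s' → adj (B K) s s' :=
    fun x s s' h => ⟨h.1, h.2.1, h.2.2.2.2⟩
  have within : ∀ t ∈ K, ∀ v w v' w' : ℕ, v ∈ t → w ∈ t → w ≠ v → v' ∈ t → w' ∈ t → w' ≠ v' →
      Relation.ReflTransGen (adj (B K)) (S v w t) (S v' w' t) := by
    intro t ht v w v' w' hv hw hne hv' hw' hne'
    exact Relation.ReflTransGen.mono (weaken _) _ _ (linkB_l2 ht hv hw hne hv' hw' hne')
  intro s₁ hs₁ s₂ hs₂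
  obtain ⟨t₁, ht₁, v₁, hv₁, w₁, hw₁, hne₁, rfl⟩ := mem_B.1 hs₁
  obtain ⟨t₂, ht₂, v₂, hv₂, w₂, hw₂, hne₂, rfl⟩ := mem_B.1 hs₂
  have hpath := hK.conn t₁ ht₁ t₂ ht₂
  have main : ∀ t', Relation.ReflTransGen (adj K) t₁ t' → t' ∈ K →
      ∀ v' w', v' ∈ t' → w' ∈ t' → w' ≠ v' →
      Relation.ReflTransGen (adj (B K)) (S v₁ w₁ t₁) (S v' w' t') := by
    intro t' hp
    induction hp with
    | refl => intro _ v' w' hv' hw' hne'; exact within t₁ ht₁ _ _ _ _ hv₁ hw₁ hne₁ hv' hw' hne'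
    | tail hab hbc ih =>
      rename_i b c
      intro hc v' w' hv' hw' hne'
      obtain ⟨hb, hcK, hcard⟩ := hbc
      obtain ⟨a, u, hane, haeq⟩ := Finset.card_eq_two.1 hcard
      have ha : a ∈ b ∩ c := haeq ▸ (by simp)
      have hu : u ∈ b ∩ c := haeq ▸ (by simp)
      rw [Finset.mem_inter] at ha hu
      have h1 := ih hb a u ha.1 hu.1 hane.symm
      have h2 := Relation.ReflTransGen.mono (weaken (l0 a)) _ _ (step_cross hb hcK ha.1 hu.1 ha.2 hu.2 hane.symm
        (l0_mem_S _ _ _) (l0_mem_S _ _ _))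
      have h3 := within c hcK a u v' w' ha.2 hu.2 hane.symm hv' hw' hne'
      exact (h1.trans h2).trans h3
  exact main t₂ hpath ht₂ v₂ w₂ hv₂ hw₂ hne₂

lemma B_nonempty {K : Complex} (hK : IsSurface K) : (B K).Nonempty := by
  obtain ⟨t, ht⟩ := hK.nonempty
  obtain ⟨a, b, c, h1, _, _, rfl⟩ := tri_decomp hK ht
  exact ⟨S a b {a, b, c}, S_mem_B ht (by simp) (by simp) h1.symm⟩

lemma B_closed {K : Complex} (hK : IsClosedSurface K) : IsClosedSurface (B K) := by
  refine ⟨⟨B_nonempty hK.1, fun s hs => B_card3 hs, ?_, B_link_conn hK.1, B_conn hK.1⟩,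
    B_edge_two hK⟩
  intro e he
  exact le_of_eq (B_edge_two hK e he)

lemma vertices_B {K : Complex} (hK : IsSurface K) :
    vertices (B K) = (vertices K).image l0 ∪ (edges K).image l1 ∪ K.image l2 := by
  ext x
  simp only [vertices, Finset.mem_biUnion, id_eq, Finset.mem_union, Finset.mem_image]
  constructor
  · rintro ⟨s, hs, hx⟩
    obtain ⟨t, ht, v, hv, w, hw, hne, rfl⟩ := mem_B.1 hs
    rcases mem_S.1 hx with rfl | rfl | rfl
    · exact Or.inl (Or.inl ⟨v, ⟨t, ht, hv⟩, rfl⟩)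
    · exact Or.inl (Or.inr ⟨{v, w}, edge_mem ht hv hw (Ne.symm hne), rfl⟩)
    · exact Or.inr ⟨t, ht, rfl⟩
  · rintro ((⟨v, hv, rfl⟩ | ⟨e, he, rfl⟩) | ⟨t, ht, rfl⟩)
    · obtain ⟨t, ht, hvt⟩ := hv
      have h2 : (t.erase v).Nonempty := by
        rw [← Finset.card_pos, erase_card2 hK ht hvt]; norm_num
      obtain ⟨w, hw⟩ := h2
      obtain ⟨hwv, hwt⟩ := Finset.mem_erase.1 hw
      exact ⟨S v w t, S_mem_B ht hvt hwt hwv, l0_mem_S _ _ _⟩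
    · obtain ⟨t, ht, hsub, hc⟩ := mem_edges.1 he
      obtain ⟨v, w, hvw, rfl⟩ := Finset.card_eq_two.1 hc
      have hvt : v ∈ t := hsub (by simp)
      have hwt : w ∈ t := hsub (by simp)
      exact ⟨S v w t, S_mem_B ht hvt hwt (Ne.symm hvw), l1_mem_S _ _ _⟩
    · obtain ⟨a, b, c, h1, _, _, rfl⟩ := tri_decomp hK ht
      exact ⟨S a b {a, b, c}, S_mem_B ht (by simp) (by simp) h1.symm, l2_mem_S _ _ _⟩

lemma vertices_B_card {K : Complex} (hK : IsSurface K) :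
    (vertices (B K)).card = (vertices K).card + (edges K).card + K.card := by
  rw [vertices_B hK]
  have d1 : Disjoint ((vertices K).image l0) ((edges K).image l1) := by
    rw [Finset.disjoint_left]
    rintro x hx hy
    obtain ⟨v, _, rfl⟩ := Finset.mem_image.1 hx
    obtain ⟨e, _, he⟩ := Finset.mem_image.1 hy
    exact l0_ne_l1 v e he.symm
  have d2 : Disjoint ((vertices K).image l0 ∪ (edges K).image l1) (K.image l2) := by
    rw [Finset.disjoint_left]
    rintro x hx hy
    obtain ⟨t, _, rfl⟩ := Finset.mem_image.1 hy
    rcases Finset.mem_union.1 hx with hx | hx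
    · obtain ⟨v, _, he⟩ := Finset.mem_image.1 hx
      exact l0_ne_l2 v t he
    · obtain ⟨e, _, he⟩ := Finset.mem_image.1 hx
      exact l1_ne_l2 e t he
  rw [Finset.card_union_of_disjoint d2, Finset.card_union_of_disjoint d1,
    Finset.card_image_of_injective _ l0_inj, Finset.card_image_of_injective _ l1_inj,
    Finset.card_image_of_injective _ l2_inj]

lemma sixTris_card {K : Complex} (hK : IsSurface K) {t : Finset ℕ} (ht : t ∈ K) :
    (t.biUnion fun v => (t.erase v).image fun w => S v w t).card = 6 := by
  rw [Finset.card_biUnion]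
  · have : ∀ v ∈ t, ((t.erase v).image fun w => S v w t).card = 2 := by
      intro v hv
      rw [Finset.card_image_of_injOn, erase_card2 hK ht hv]
      intro a ha b hb hab
      exact ((S_eq (Finset.mem_erase.1 ha).1 (Finset.mem_erase.1 hb).1).1 hab).2.1
    rw [Finset.sum_congr rfl this, Finset.sum_const, hK.card3 t ht]
    rfl
  · intro v hv v' hv' hne
    simp only [Function.onFun]; rw [Finset.disjoint_left]
    rintro x hx hy
    obtain ⟨a, ha, rfl⟩ := Finset.mem_image.1 hx
    obtain ⟨b, hb, hba⟩ := Finset.mem_image.1 hy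
    exact hne (((S_eq (Finset.mem_erase.1 hb).1 (Finset.mem_erase.1 ha).1).1 hba).1.symm)

lemma B_card {K : Complex} (hK : IsSurface K) : (B K).card = 6 * K.card := by
  rw [B, Finset.card_biUnion]
  · rw [Finset.sum_congr rfl (fun t ht => sixTris_card hK ht), Finset.sum_const,
      smul_eq_mul, mul_comm]
  · intro t ht t' ht' hne
    simp only [Function.onFun]; rw [Finset.disjoint_left]
    rintro x hx hy
    simp only [Finset.mem_biUnion, Finset.mem_image, Finset.mem_erase] at hx hy
    obtain ⟨v, hv, a, ⟨hav, hat⟩, rfl⟩ := hx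
    obtain ⟨v', hv', b, ⟨hbv, hbt⟩, hba⟩ := hy
    exact hne (((S_eq hbv hav).1 hba).2.2.symm)

/-- edge families of the subdivision -/
def eA (K : Complex) : Finset (Finset ℕ) :=
  (edges K).biUnion fun e => e.image fun v => ({l0 v, l1 e} : Finset ℕ)
def eB (K : Complex) : Finset (Finset ℕ) :=
  K.biUnion fun t => t.image fun v => ({l0 v, l2 t} : Finset ℕ)
def eC (K : Complex) : Finset (Finset ℕ) :=
  K.biUnion fun t => (t.powersetCard 2).image fun e => ({l1 e, l2 t} : Finset ℕ)

lemma edges_B {K : Complex} (hK : IsSurface K) : edges (B K) = eA K ∪ eB K ∪ eC K := by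
  ext x
  simp only [Finset.mem_union, eA, eB, eC, Finset.mem_biUnion, Finset.mem_image]
  constructor
  · intro hx
    obtain ⟨s, hs, hsub, hc⟩ := mem_edges.1 hx
    obtain ⟨t, ht, v, hv, w, hw, hne, rfl⟩ := mem_B.1 hs
    rcases pair_sub_triple hsub hc with rfl | rfl | rfl
    · exact Or.inl (Or.inl ⟨{v, w}, edge_mem ht hv hw (Ne.symm hne), v, by simp, rfl⟩)
    · exact Or.inl (Or.inr ⟨t, ht, v, hv, rfl⟩)
    · refine Or.inr ⟨t, ht, {v, w}, ?_, rfl⟩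
      rw [Finset.mem_powersetCard]
      refine ⟨?_, Finset.card_pair (Ne.symm hne)⟩
      intro y hy
      simp only [Finset.mem_insert, Finset.mem_singleton] at hy
      rcases hy with rfl | rfl <;> assumption
  · rintro ((⟨e, he, v, hv, rfl⟩ | ⟨t, ht, v, hv, rfl⟩) | ⟨t, ht, e, he, rfl⟩)
    · obtain ⟨t, ht, hsub, hc⟩ := mem_edges.1 he
      obtain ⟨a, b, hab, rfl⟩ := Finset.card_eq_two.1 hc
      have hat : a ∈ t := hsub (by simp)
      have hbt : b ∈ t := hsub (by simp)
      simp only [Finset.mem_insert, Finset.mem_singleton] at hv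
      refine mem_edges.2 ?_
      rcases hv with rfl | rfl
      · exact ⟨S v b t, S_mem_B ht hat hbt (Ne.symm hab), by
          intro y hy
          simp only [Finset.mem_insert, Finset.mem_singleton] at hy
          rcases hy with rfl | rfl
          · exact l0_mem_S _ _ _
          · exact l1_mem_S _ _ _, Finset.card_pair (l0_ne_l1 _ _)⟩
      · refine ⟨S v a t, S_mem_B ht hbt hat hab, ?_, Finset.card_pair (l0_ne_l1 _ _)⟩
        intro y hy
        simp only [Finset.mem_insert, Finset.mem_singleton] at hy
        rcases hy with rfl | rfl
        · exact l0_mem_S _ _ _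
        · rw [Finset.pair_comm a v]
          exact l1_mem_S _ _ _
    · have h2 : (t.erase v).Nonempty := by
        rw [← Finset.card_pos, erase_card2 hK ht hv]; norm_num
      obtain ⟨w, hw⟩ := h2
      obtain ⟨hwv, hwt⟩ := Finset.mem_erase.1 hw
      refine mem_edges.2 ⟨S v w t, S_mem_B ht hv hwt hwv, ?_, Finset.card_pair (l0_ne_l2 _ _)⟩
      intro y hy
      simp only [Finset.mem_insert, Finset.mem_singleton] at hy
      rcases hy with rfl | rfl
      · exact l0_mem_S _ _ _
      · exact l2_mem_S _ _ _
    · rw [Finset.mem_powersetCard] at he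
      obtain ⟨a, b, hab, rfl⟩ := Finset.card_eq_two.1 he.2
      have hat : a ∈ t := he.1 (by simp)
      have hbt : b ∈ t := he.1 (by simp)
      refine mem_edges.2 ⟨S a b t, S_mem_B ht hat hbt (Ne.symm hab), ?_,
        Finset.card_pair (l1_ne_l2 _ _)⟩
      intro y hy
      simp only [Finset.mem_insert, Finset.mem_singleton] at hy
      rcases hy with rfl | rfl
      · exact l1_mem_S _ _ _
      · exact l2_mem_S _ _ _

lemma pair_eq_iff_l {x y x' y' : ℕ} (hxy : x ≠ y)
    (h : ({x, y} : Finset ℕ) = {x', y'}) (hx : x ≠ y') : x = x' ∧ y = y' := by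
  rcases pair_eq hxy h with h' | h'
  · exact h'
  · exact absurd h'.1 hx

lemma eA_card {K : Complex} (hK : IsSurface K) : (eA K).card = 2 * (edges K).card := by
  rw [eA, Finset.card_biUnion]
  · have h2 : ∀ e ∈ edges K, (e.image fun v => ({l0 v, l1 e} : Finset ℕ)).card = 2 := by
      intro e he
      obtain ⟨t, ht, hsub, hc⟩ := mem_edges.1 he
      rw [Finset.card_image_of_injOn
        (fun a _ b _ hab => l0_inj (pair_eq_iff_l (l0_ne_l1 _ _) hab (l0_ne_l1 _ _)).1), hc]
    rw [Finset.sum_congr rfl h2, Finset.sum_const, smul_eq_mul, mul_comm]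
  · intro e he e' he' hne
    simp only [Function.onFun]; rw [Finset.disjoint_left]
    rintro x hx hy
    obtain ⟨a, _, rfl⟩ := Finset.mem_image.1 hx
    obtain ⟨b, _, hb⟩ := Finset.mem_image.1 hy
    exact hne (l1_inj (pair_eq_iff_l (l0_ne_l1 _ _) hb (l0_ne_l1 _ _)).2).symm

lemma eB_card {K : Complex} (hK : IsSurface K) : (eB K).card = 3 * K.card := by
  rw [eB, Finset.card_biUnion]
  · have h2 : ∀ t ∈ K, (t.image fun v => ({l0 v, l2 t} : Finset ℕ)).card = 3 := by
      intro t ht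
      rw [Finset.card_image_of_injOn
        (fun a _ b _ hab => l0_inj (pair_eq_iff_l (l0_ne_l2 _ _) hab (l0_ne_l2 _ _)).1),
        hK.card3 t ht]
    rw [Finset.sum_congr rfl h2, Finset.sum_const, smul_eq_mul, mul_comm]
  · intro t ht t' ht' hne
    simp only [Function.onFun]; rw [Finset.disjoint_left]
    rintro x hx hy
    obtain ⟨a, _, rfl⟩ := Finset.mem_image.1 hx
    obtain ⟨b, _, hb⟩ := Finset.mem_image.1 hy
    exact hne (l2_inj (pair_eq_iff_l (l0_ne_l2 _ _) hb (l0_ne_l2 _ _)).2).symm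

lemma eC_card {K : Complex} (hK : IsSurface K) : (eC K).card = 3 * K.card := by
  rw [eC, Finset.card_biUnion]
  · have h2 : ∀ t ∈ K,
        ((t.powersetCard 2).image fun e => ({l1 e, l2 t} : Finset ℕ)).card = 3 := by
      intro t ht
      rw [Finset.card_image_of_injOn
        (fun a _ b _ hab => l1_inj (pair_eq_iff_l (l1_ne_l2 _ _) hab (l1_ne_l2 _ _)).1),
        Finset.card_powersetCard, hK.card3 t ht]
      rfl
    rw [Finset.sum_congr rfl h2, Finset.sum_const, smul_eq_mul, mul_comm]
  · intro t ht t' ht' hne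
    simp only [Function.onFun]; rw [Finset.disjoint_left]
    rintro x hx hy
    obtain ⟨a, _, rfl⟩ := Finset.mem_image.1 hx
    obtain ⟨b, _, hb⟩ := Finset.mem_image.1 hy
    exact hne (l2_inj (pair_eq_iff_l (l1_ne_l2 _ _) hb (l1_ne_l2 _ _)).2).symm

lemma edges_B_card {K : Complex} (hK : IsSurface K) :
    (edges (B K)).card = 2 * (edges K).card + 6 * K.card := by
  have d1 : Disjoint (eA K) (eB K) := by
    rw [Finset.disjoint_left]
    rintro x hx hy
    simp only [eA, eB, Finset.mem_biUnion, Finset.mem_image] at hx hy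
    obtain ⟨e, _, a, _, rfl⟩ := hx
    obtain ⟨t, _, b, _, hb⟩ := hy
    rcases pair_eq (l0_ne_l2 b t) hb with ⟨_, h2⟩ | ⟨h1, _⟩
    · exact l1_ne_l2 e t h2.symm
    · exact l0_ne_l1 b e h1
  have d2 : Disjoint (eA K ∪ eB K) (eC K) := by
    rw [Finset.disjoint_left]
    rintro x hx hy
    simp only [eA, eB, eC, Finset.mem_union, Finset.mem_biUnion, Finset.mem_image] at hx hy
    obtain ⟨t, _, e, _, rfl⟩ := hy
    rcases hx with ⟨e', _, a, _, ha⟩ | ⟨t', _, a, _, ha⟩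
    · rcases pair_eq (l0_ne_l1 a e') ha with ⟨h1, _⟩ | ⟨h1, _⟩
      · exact l0_ne_l1 a e h1
      · exact l0_ne_l2 a t h1
    · rcases pair_eq (l0_ne_l2 a t') ha with ⟨h1, _⟩ | ⟨h1, _⟩
      · exact l0_ne_l1 a e h1
      · exact l0_ne_l2 a t h1
  rw [edges_B hK, Finset.card_union_of_disjoint d2, Finset.card_union_of_disjoint d1,
    eA_card hK, eB_card hK, eC_card hK]
  ring

lemma eulerChar_B {K : Complex} (hK : IsSurface K) : eulerChar (B K) = eulerChar K := by
  rw [eulerChar, eulerChar, vertices_B_card hK, edges_B_card hK, B_card hK]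
  push_cast
  ring

lemma B_val_l0 {K : Complex} (hK : IsSurface K) (v : ℕ) :
    valence (B K) (l0 v) = 2 * valence K v := by
  have hF : (B K).filter (fun s => l0 v ∈ s) =
      (K.filter (fun t => v ∈ t)).biUnion (fun t => (t.erase v).image fun w => S v w t) := by
    ext s
    simp only [Finset.mem_filter, Finset.mem_biUnion, Finset.mem_image, Finset.mem_erase]
    constructor
    · rintro ⟨hs, hxs⟩
      obtain ⟨t, ht, w, hw, hwv, hvt, rfl⟩ := parse_l0 hs hxs
      exact ⟨t, ⟨ht, hvt⟩, w, ⟨hwv, hw⟩, rfl⟩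
    · rintro ⟨t, ⟨ht, hvt⟩, w, ⟨hwv, hwt⟩, rfl⟩
      exact ⟨S_mem_B ht hvt hwt hwv, l0_mem_S _ _ _⟩
  rw [valence, hF, Finset.card_biUnion]
  · have h2 : ∀ t ∈ K.filter (fun t => v ∈ t),
        ((t.erase v).image fun w => S v w t).card = 2 := by
      intro t ht
      obtain ⟨htK, hvt⟩ := Finset.mem_filter.1 ht
      rw [Finset.card_image_of_injOn, erase_card2 hK htK hvt]
      intro a ha b hb hab
      exact ((S_eq (Finset.mem_erase.1 ha).1 (Finset.mem_erase.1 hb).1).1 hab).2.1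
    rw [Finset.sum_congr rfl h2, Finset.sum_const, smul_eq_mul, mul_comm, valence]
  · intro t ht t' ht' hne
    simp only [Function.onFun]; rw [Finset.disjoint_left]
    rintro x hx hy
    obtain ⟨a, ha, rfl⟩ := Finset.mem_image.1 hx
    obtain ⟨b, hb, hba⟩ := Finset.mem_image.1 hy
    exact hne (((S_eq (Finset.mem_erase.1 hb).1 (Finset.mem_erase.1 ha).1).1 hba).2.2.symm)

lemma B_val_l1 {K : Complex} {v w : ℕ} (hne : w ≠ v) :
    valence (B K) (l1 {v, w}) = 2 * (K.filter (fun t => v ∈ t ∧ w ∈ t)).card := by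
  have hF : (B K).filter (fun s => l1 ({v, w} : Finset ℕ) ∈ s) =
      (K.filter (fun t => v ∈ t ∧ w ∈ t)).biUnion
        (fun t => {S v w t, S w v t}) := by
    ext s
    simp only [Finset.mem_filter, Finset.mem_biUnion, Finset.mem_insert, Finset.mem_singleton]
    constructor
    · rintro ⟨hs, hxs⟩
      obtain ⟨t, ht, hvt, hwt, hor⟩ := parse_l1 hs hne hxs
      exact ⟨t, ⟨ht, hvt, hwt⟩, hor⟩
    · rintro ⟨t, ⟨ht, hvt, hwt⟩, rfl | rfl⟩
      · exact ⟨S_mem_B ht hvt hwt hne, l1_mem_S _ _ _⟩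
      · exact ⟨S_mem_B ht hwt hvt (Ne.symm hne), l1_mem_S' _ _ _⟩
  rw [valence, hF, Finset.card_biUnion]
  · have h2 : ∀ t ∈ K.filter (fun t => v ∈ t ∧ w ∈ t),
        ({S v w t, S w v t} : Finset (Finset ℕ)).card = 2 := by
      intro t _
      exact Finset.card_pair (fun hcon => hne ((S_eq hne (Ne.symm hne)).1 hcon).2.1)
    rw [Finset.sum_congr rfl h2, Finset.sum_const, smul_eq_mul, mul_comm]
  · intro t ht t' ht' htne
    simp only [Function.onFun]; rw [Finset.disjoint_left]
    rintro x hx hy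
    simp only [Finset.mem_insert, Finset.mem_singleton] at hx hy
    have hteq : ∀ {a b : ℕ}, b ≠ a → (x = S a b t → x = S a b t' → False) := by
      intro a b hba h1 h2
      exact htne ((S_eq hba hba).1 (h1 ▸ h2 ▸ rfl : S a b t = S a b t')).2.2
    rcases hx with rfl | rfl <;> rcases hy with hy | hy
    · exact htne ((S_eq hne hne).1 hy).2.2
    · exact hne (((S_eq hne (Ne.symm hne)).1 hy).2.1)
    · exact hne (((S_eq (Ne.symm hne) hne).1 hy).2.1.symm)
    · exact htne ((S_eq (Ne.symm hne) (Ne.symm hne)).1 hy).2.2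

lemma B_val_l2 {K : Complex} (hK : IsSurface K) {t : Finset ℕ} (ht : t ∈ K) :
    valence (B K) (l2 t) = 6 := by
  have hF : (B K).filter (fun s => l2 t ∈ s) =
      t.biUnion fun v => (t.erase v).image fun w => S v w t := by
    ext s
    simp only [Finset.mem_filter, Finset.mem_biUnion, Finset.mem_image, Finset.mem_erase]
    constructor
    · rintro ⟨hs, hxs⟩
      obtain ⟨v, hv, w, hw, hwv, _, rfl⟩ := parse_l2 hs hxs
      exact ⟨v, hv, w, ⟨hwv, hw⟩, rfl⟩
    · rintro ⟨v, hv, w, ⟨hwv, hwt⟩, rfl⟩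
      exact ⟨S_mem_B ht hv hwt hwv, l2_mem_S _ _ _⟩
  rw [valence, hF, sixTris_card hK ht]

lemma B_valence_ne_three {K : Complex} (hK : IsSurface K) (x : ℕ) :
    valence (B K) x ≠ 3 := by
  by_cases hx : ∃ s ∈ B K, x ∈ s
  · obtain ⟨s, hs, hxs⟩ := hx
    obtain ⟨t, ht, v, hv, w, hw, hne, rfl⟩ := mem_B.1 hs
    rcases mem_S.1 hxs with rfl | rfl | rfl
    · rw [B_val_l0 hK]; omega
    · rw [B_val_l1 hne]; omega
    · rw [B_val_l2 hK ht]; omega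
  · have : (B K).filter (fun s => x ∈ s) = ∅ := by
      rw [Finset.filter_eq_empty_iff]
      intro s hs hxs
      exact hx ⟨s, hs, hxs⟩
    rw [valence, this]
    simp

lemma B_no_invT {K : Complex} (hK : IsSurface K) : ∀ K', ¬ InvTStep (B K) K' := by
  rintro K' ⟨v, hval, _, _⟩
  exact B_valence_ne_three hK v hval

lemma mem_dedges' {a b c : ℕ} {x : ℕ × ℕ} :
    x ∈ dedges (a, b, c) ↔ x = (a, b) ∨ x = (b, c) ∨ x = (c, a) := by
  simp [dedges]

lemma cyc_not_both {a b c v w : ℕ} (hab : a ≠ b) (hac : a ≠ c) (hbc : b ≠ c)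
    (h1 : (v, w) ∈ dedges (a, b, c)) (h2 : (w, v) ∈ dedges (a, b, c)) : False := by
  rw [mem_dedges'] at h1 h2
  simp only [Prod.mk.injEq] at h1 h2
  omega

lemma cyc_total {a b c v w : ℕ} (hv : v ∈ ({a, b, c} : Finset ℕ))
    (hw : w ∈ ({a, b, c} : Finset ℕ)) (hab : a ≠ b) (hac : a ≠ c) (hbc : b ≠ c)
    (hvw : v ≠ w) : (v, w) ∈ dedges (a, b, c) ∨ (w, v) ∈ dedges (a, b, c) := by
  simp only [Finset.mem_insert, Finset.mem_singleton] at hv hw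
  rw [mem_dedges', mem_dedges']
  simp only [Prod.mk.injEq]
  omega

lemma cyc_out_unique {a b c v w w' : ℕ} (hab : a ≠ b) (hac : a ≠ c) (hbc : b ≠ c)
    (h1 : (v, w) ∈ dedges (a, b, c)) (h2 : (v, w') ∈ dedges (a, b, c)) : w = w' := by
  rw [mem_dedges'] at h1 h2
  simp only [Prod.mk.injEq] at h1 h2
  omega

lemma cyc_in_unique {a b c v w w' : ℕ} (hab : a ≠ b) (hac : a ≠ c) (hbc : b ≠ c)
    (h1 : (w, v) ∈ dedges (a, b, c)) (h2 : (w', v) ∈ dedges (a, b, c)) : w = w' := by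
  rw [mem_dedges'] at h1 h2
  simp only [Prod.mk.injEq] at h1 h2
  omega

/-- positively / negatively oriented directed-edge sets of a small triangle -/
def dP (v w : ℕ) (t : Finset ℕ) : Finset (ℕ × ℕ) :=
  {(l0 v, l1 {v, w}), (l1 {v, w}, l2 t), (l2 t, l0 v)}
def dN (v w : ℕ) (t : Finset ℕ) : Finset (ℕ × ℕ) :=
  {(l1 {v, w}, l0 v), (l0 v, l2 t), (l2 t, l1 {v, w})}

lemma dedges_triple (a b c : ℕ) : dedges (a, b, c) = {(a, b), (b, c), (c, a)} := rfl

lemma o_distinct {K : Complex} (hK : IsSurface K) {o : Finset ℕ → ℕ × ℕ × ℕ}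
    (ho : ∀ t ∈ K, ({(o t).1, (o t).2.1, (o t).2.2} : Finset ℕ) = t) {t : Finset ℕ}
    (ht : t ∈ K) : (o t).1 ≠ (o t).2.1 ∧ (o t).1 ≠ (o t).2.2 ∧ (o t).2.1 ≠ (o t).2.2 :=
  triple_distinct (by rw [ho t ht]; exact hK.card3 t ht)

lemma orientable_B {K : Complex} (hK : IsSurface K) (hor : Orientable K) :
    Orientable (B K) := by
  obtain ⟨o, ho1, ho2⟩ := hor
  -- spec for the orientation of each small triangle
  have hex : ∀ s, ∃ p : ℕ × ℕ × ℕ, s ∈ B K →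
      ({p.1, p.2.1, p.2.2} : Finset ℕ) = s ∧
      ∀ v w t, t ∈ K → v ∈ t → w ∈ t → w ≠ v → s = S v w t →
        (((v, w) ∈ dedges (o t) → dedges p = dP v w t) ∧
         ((v, w) ∉ dedges (o t) → dedges p = dN v w t)) := by
    intro s
    by_cases hs : s ∈ B K
    · obtain ⟨t₀, ht₀, v₀, hv₀, w₀, hw₀, hne₀, rfl⟩ := mem_B.1 hs
      by_cases hd : (v₀, w₀) ∈ dedges (o t₀)
      · refine ⟨(l0 v₀, l1 {v₀, w₀}, l2 t₀), fun _ => ⟨rfl, ?_⟩⟩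
        intro v w t ht hv hw hne hSeq
        obtain ⟨rfl, rfl, rfl⟩ := (S_eq hne₀ hne).1 hSeq
        exact ⟨fun _ => rfl, fun hcon => absurd hd hcon⟩
      · refine ⟨(l1 {v₀, w₀}, l0 v₀, l2 t₀), fun _ => ⟨?_, ?_⟩⟩
        · show ({l1 {v₀, w₀}, l0 v₀, l2 t₀} : Finset ℕ) = S v₀ w₀ t₀
          rw [S, Finset.insert_comm]
        · intro v w t ht hv hw hne hSeq
          obtain ⟨rfl, rfl, rfl⟩ := (S_eq hne₀ hne).1 hSeq
          exact ⟨fun hcon => absurd hcon hd, fun _ => rfl⟩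
    · exact ⟨(0, 0, 0), fun hcon => absurd hcon hs⟩
  choose oB hoB using hex
  refine ⟨oB, fun s hs => (hoB s hs).1, ?_⟩
  intro s₁ hs₁ s₂ hs₂ hne q hq1 hq2
  obtain ⟨t₁, ht₁, v₁, hv₁, w₁, hw₁, hne₁, rfl⟩ := mem_B.1 hs₁
  obtain ⟨t₂, ht₂, v₂, hv₂, w₂, hw₂, hne₂, rfl⟩ := mem_B.1 hs₂
  have hspec₁ := ((hoB _ hs₁).2 v₁ w₁ t₁ ht₁ hv₁ hw₁ hne₁ rfl)
  have hspec₂ := ((hoB _ hs₂).2 v₂ w₂ t₂ ht₂ hv₂ hw₂ hne₂ rfl)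
  obtain ⟨q1, q2⟩ := q
  obtain ⟨d₁a, d₁b, d₁c⟩ := o_distinct hK ho1 ht₁
  obtain ⟨d₂a, d₂b, d₂c⟩ := o_distinct hK ho1 ht₂
  have hod₁ : dedges (o t₁) = dedges ((o t₁).1, (o t₁).2.1, (o t₁).2.2) := rfl
  have hod₂ : dedges (o t₂) = dedges ((o t₂).1, (o t₂).2.1, (o t₂).2.2) := rfl
  -- totality of the orientation on t
  have htot : ∀ (t : Finset ℕ), t ∈ K → ∀ v w, v ∈ t → w ∈ t → w ≠ v →
      (v, w) ∉ dedges (o t) → (w, v) ∈ dedges (o t) := by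
    intro t ht v w hv hw hvw hno
    obtain ⟨da, db, dc⟩ := o_distinct hK ho1 ht
    have hv' : v ∈ ({(o t).1, (o t).2.1, (o t).2.2} : Finset ℕ) := by rw [ho1 t ht]; exact hv
    have hw' : w ∈ ({(o t).1, (o t).2.1, (o t).2.2} : Finset ℕ) := by rw [ho1 t ht]; exact hw
    rcases cyc_total hv' hw' da db dc (Ne.symm hvw) with h | h
    · exact absurd h hno
    · exact h
  by_cases hd₁ : (v₁, w₁) ∈ dedges (o t₁) <;> by_cases hd₂ : (v₂, w₂) ∈ dedges (o t₂)
  · rw [hspec₁.1 hd₁] at hq1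
    rw [hspec₂.1 hd₂] at hq2
    simp only [dP, Finset.mem_insert, Finset.mem_singleton, Prod.mk.injEq] at hq1 hq2
    rcases hq1 with ⟨e1, e2⟩ | ⟨e1, e2⟩ | ⟨e1, e2⟩ <;>
      rcases hq2 with ⟨f1, f2⟩ | ⟨f1, f2⟩ | ⟨f1, f2⟩ <;>
      (try exact absurd (e1.symm.trans f1) (l0_ne_l1 _ _)) <;>
      (try exact absurd (f1.symm.trans e1) (l0_ne_l1 _ _)) <;>
      (try exact absurd (e1.symm.trans f1) (l0_ne_l2 _ _)) <;>
      (try exact absurd (f1.symm.trans e1) (l0_ne_l2 _ _)) <;>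
      (try exact absurd (e1.symm.trans f1) (l1_ne_l2 _ _)) <;>
      (try exact absurd (f1.symm.trans e1) (l1_ne_l2 _ _))
    · -- (l0 v, l1 e) shared
      have hvv : v₁ = v₂ := l0_inj (e1.symm.trans f1)
      subst hvv
      have he := l1_inj (e2.symm.trans f2)
      obtain ⟨_, rfl⟩ := pair_eq_iff_l (Ne.symm hne₁) he (Ne.symm hne₂)
      have htne : t₁ ≠ t₂ := fun hcon => hne (by rw [hcon])
      exact ho2 t₁ ht₁ t₂ ht₂ htne _ hd₁ (by rwa [])
    · -- (l1 e, l2 t) shared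
      have he := l1_inj (e1.symm.trans f1)
      have htt : t₁ = t₂ := l2_inj (e2.symm.trans f2)
      subst htt
      rcases pair_eq (Ne.symm hne₁) he with ⟨rfl, rfl⟩ | ⟨rfl, rfl⟩
      · exact hne rfl
      · exact cyc_not_both d₁a d₁b d₁c (hod₁ ▸ hd₁) (hod₁ ▸ hd₂)
    · -- (l2 t, l0 v) shared
      have htt : t₁ = t₂ := l2_inj (e1.symm.trans f1)
      subst htt
      have hvv : v₁ = v₂ := l0_inj (e2.symm.trans f2)
      subst hvv
      have hww : w₁ = w₂ :=
        cyc_out_unique d₁a d₁b d₁c (hod₁ ▸ hd₁) (hod₁ ▸ hd₂)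
      exact hne (by rw [hww])
  · rw [hspec₁.1 hd₁] at hq1
    rw [hspec₂.2 hd₂] at hq2
    simp only [dP, dN, Finset.mem_insert, Finset.mem_singleton, Prod.mk.injEq] at hq1 hq2
    rcases hq1 with ⟨e1, e2⟩ | ⟨e1, e2⟩ | ⟨e1, e2⟩ <;>
      rcases hq2 with ⟨f1, f2⟩ | ⟨f1, f2⟩ | ⟨f1, f2⟩ <;>
      first
      | exact absurd (e1.symm.trans f1) (l0_ne_l1 _ _)
      | exact absurd (f1.symm.trans e1) (l0_ne_l1 _ _)
      | exact absurd (e1.symm.trans f1) (l0_ne_l2 _ _)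
      | exact absurd (f1.symm.trans e1) (l0_ne_l2 _ _)
      | exact absurd (e1.symm.trans f1) (l1_ne_l2 _ _)
      | exact absurd (f1.symm.trans e1) (l1_ne_l2 _ _)
      | exact absurd (e2.symm.trans f2) (l0_ne_l1 _ _)
      | exact absurd (f2.symm.trans e2) (l0_ne_l1 _ _)
      | exact absurd (e2.symm.trans f2) (l0_ne_l2 _ _)
      | exact absurd (f2.symm.trans e2) (l0_ne_l2 _ _)
      | exact absurd (e2.symm.trans f2) (l1_ne_l2 _ _)
      | exact absurd (f2.symm.trans e2) (l1_ne_l2 _ _)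
  · rw [hspec₁.2 hd₁] at hq1
    rw [hspec₂.1 hd₂] at hq2
    simp only [dP, dN, Finset.mem_insert, Finset.mem_singleton, Prod.mk.injEq] at hq1 hq2
    rcases hq1 with ⟨e1, e2⟩ | ⟨e1, e2⟩ | ⟨e1, e2⟩ <;>
      rcases hq2 with ⟨f1, f2⟩ | ⟨f1, f2⟩ | ⟨f1, f2⟩ <;>
      first
      | exact absurd (e1.symm.trans f1) (l0_ne_l1 _ _)
      | exact absurd (f1.symm.trans e1) (l0_ne_l1 _ _)
      | exact absurd (e1.symm.trans f1) (l0_ne_l2 _ _)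
      | exact absurd (f1.symm.trans e1) (l0_ne_l2 _ _)
      | exact absurd (e1.symm.trans f1) (l1_ne_l2 _ _)
      | exact absurd (f1.symm.trans e1) (l1_ne_l2 _ _)
      | exact absurd (e2.symm.trans f2) (l0_ne_l1 _ _)
      | exact absurd (f2.symm.trans e2) (l0_ne_l1 _ _)
      | exact absurd (e2.symm.trans f2) (l0_ne_l2 _ _)
      | exact absurd (f2.symm.trans e2) (l0_ne_l2 _ _)
      | exact absurd (e2.symm.trans f2) (l1_ne_l2 _ _)
      | exact absurd (f2.symm.trans e2) (l1_ne_l2 _ _)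
  · rw [hspec₁.2 hd₁] at hq1
    rw [hspec₂.2 hd₂] at hq2
    simp only [dN, Finset.mem_insert, Finset.mem_singleton, Prod.mk.injEq] at hq1 hq2
    have hr₁ : (w₁, v₁) ∈ dedges (o t₁) := htot t₁ ht₁ v₁ w₁ hv₁ hw₁ hne₁ hd₁
    have hr₂ : (w₂, v₂) ∈ dedges (o t₂) := htot t₂ ht₂ v₂ w₂ hv₂ hw₂ hne₂ hd₂
    rcases hq1 with ⟨e1, e2⟩ | ⟨e1, e2⟩ | ⟨e1, e2⟩ <;>
      rcases hq2 with ⟨f1, f2⟩ | ⟨f1, f2⟩ | ⟨f1, f2⟩ <;>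
      (try exact absurd (e1.symm.trans f1) (l0_ne_l1 _ _)) <;>
      (try exact absurd (f1.symm.trans e1) (l0_ne_l1 _ _)) <;>
      (try exact absurd (e1.symm.trans f1) (l0_ne_l2 _ _)) <;>
      (try exact absurd (f1.symm.trans e1) (l0_ne_l2 _ _)) <;>
      (try exact absurd (e1.symm.trans f1) (l1_ne_l2 _ _)) <;>
      (try exact absurd (f1.symm.trans e1) (l1_ne_l2 _ _)) <;>
      (try exact absurd (e2.symm.trans f2) (l1_ne_l2 _ _)) <;>
      (try exact absurd (f2.symm.trans e2) (l1_ne_l2 _ _))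
    · -- (l1 e, l0 v) shared
      have he := l1_inj (e1.symm.trans f1)
      have hvv : v₁ = v₂ := l0_inj (e2.symm.trans f2)
      subst hvv
      obtain ⟨_, rfl⟩ := pair_eq_iff_l (Ne.symm hne₁) he (Ne.symm hne₂)
      have htne : t₁ ≠ t₂ := fun hcon => hne (by rw [hcon])
      exact ho2 t₁ ht₁ t₂ ht₂ htne _ hr₁ (by rwa [])
    · -- (l0 v, l2 t) shared
      have hvv : v₁ = v₂ := l0_inj (e1.symm.trans f1)
      subst hvv
      have htt : t₁ = t₂ := l2_inj (e2.symm.trans f2)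
      subst htt
      have hww : w₁ = w₂ :=
        cyc_in_unique d₁a d₁b d₁c (hod₁ ▸ hr₁) (hod₁ ▸ hr₂)
      exact hne (by rw [hww])
    · -- (l2 t, l1 e) shared
      have htt : t₁ = t₂ := l2_inj (e1.symm.trans f1)
      subst htt
      have he := l1_inj (e2.symm.trans f2)
      rcases pair_eq (Ne.symm hne₁) he with ⟨rfl, rfl⟩ | ⟨rfl, rfl⟩
      · exact hne rfl
      · exact cyc_not_both d₁a d₁b d₁c (hod₁ ▸ hr₁) (hod₁ ▸ hr₂)

lemma triple_orient {x y z : ℕ} (hxy : x ≠ y) (hxz : x ≠ z) (hyz : y ≠ z) {p : ℕ × ℕ × ℕ}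
    (hp : ({p.1, p.2.1, p.2.2} : Finset ℕ) = {x, y, z}) :
    dedges p = {(x, y), (y, z), (z, x)} ∨ dedges p = {(y, x), (x, z), (z, y)} := by
  obtain ⟨a, b, c⟩ := p
  simp only at hp
  have hcard : ({a, b, c} : Finset ℕ).card = 3 := by
    rw [hp, Finset.card_insert_of_notMem (by simp [hxy, hxz]), Finset.card_pair hyz]
  obtain ⟨hab, hac, hbc⟩ := triple_distinct hcard
  have ha : a ∈ ({x, y, z} : Finset ℕ) := hp ▸ (by simp)
  have hb : b ∈ ({x, y, z} : Finset ℕ) := hp ▸ (by simp)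
  have hc : c ∈ ({x, y, z} : Finset ℕ) := hp ▸ (by simp)
  simp only [Finset.mem_insert, Finset.mem_singleton] at ha hb hc
  rcases ha with rfl | rfl | rfl <;> rcases hb with rfl | rfl | rfl <;>
    rcases hc with rfl | rfl | rfl <;>
    first
    | exact absurd rfl hab
    | exact absurd rfl hac
    | exact absurd rfl hbc
    | (left; ext ⟨q1, q2⟩; rw [dedges_triple];
       (try simp only [Finset.mem_insert, Finset.mem_singleton, Prod.mk.injEq]);
       (try constructor <;> rintro (⟨rfl, rfl⟩ | ⟨rfl, rfl⟩ | ⟨rfl, rfl⟩) <;> simp); done)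
    | (right; ext ⟨q1, q2⟩; rw [dedges_triple];
       (try simp only [Finset.mem_insert, Finset.mem_singleton, Prod.mk.injEq]);
       (try constructor <;> rintro (⟨rfl, rfl⟩ | ⟨rfl, rfl⟩ | ⟨rfl, rfl⟩) <;> simp); done)

lemma orientable_of_B {K : Complex} (hK : IsSurface K) (hor : Orientable (B K)) :
    Orientable K := by
  obtain ⟨o, ho1, ho2⟩ := hor
  -- dedges of a small triangle is one of two explicit sets
  have hPN : ∀ {v w : ℕ} {t : Finset ℕ}, t ∈ K → v ∈ t → w ∈ t → w ≠ v →
      dedges (o (S v w t)) = dP v w t ∨ dedges (o (S v w t)) = dN v w t := by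
    intro v w t ht hv hw hne
    have hsB := S_mem_B ht hv hw hne
    have hp := ho1 _ hsB
    exact triple_orient (l0_ne_l1 v {v, w}) (l0_ne_l2 v t) (l1_ne_l2 {v, w} t)
      (p := o (S v w t)) (by rw [hp]; rfl)
  have xor1 : ∀ {v w : ℕ} {t : Finset ℕ}, t ∈ K → v ∈ t → w ∈ t → w ≠ v →
      (dedges (o (S v w t)) = dP v w t ↔ ¬ dedges (o (S w v t)) = dP w v t) := by
    intro v w t ht hv hw hne
    have hSne : S v w t ≠ S w v t :=
      fun hc => hne (((S_eq hne (Ne.symm hne)).1 hc).1).symm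
    have hco := ho2 _ (S_mem_B ht hv hw hne) _ (S_mem_B ht hw hv (Ne.symm hne)) hSne
    constructor
    · intro h1 h2
      exact hco (l1 {v, w}, l2 t) (by rw [h1]; simp [dP])
        (by rw [h2, dP, Finset.pair_comm w v]; simp)
    · intro h2
      rcases hPN ht hv hw hne with h1 | h1
      · exact h1
      · exfalso
        rcases hPN ht hw hv (Ne.symm hne) with h3 | h3
        · exact h2 h3
        · exact hco (l2 t, l1 {v, w}) (by rw [h1]; simp [dN])
            (by rw [h3, dN, Finset.pair_comm w v]; simp)
  have xor2 : ∀ {v w u : ℕ} {t : Finset ℕ}, t ∈ K → v ∈ t → w ∈ t → u ∈ t → w ≠ v → u ≠ v →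
      w ≠ u → (dedges (o (S v w t)) = dP v w t ↔ ¬ dedges (o (S v u t)) = dP v u t) := by
    intro v w u t ht hv hw hu hwv huv hwu
    have hSne : S v w t ≠ S v u t := fun hc => hwu ((S_eq hwv huv).1 hc).2.1
    have hco := ho2 _ (S_mem_B ht hv hw hwv) _ (S_mem_B ht hv hu huv) hSne
    constructor
    · intro h1 h2
      exact hco (l2 t, l0 v) (by rw [h1]; simp [dP]) (by rw [h2]; simp [dP])
    · intro h2
      rcases hPN ht hv hw hwv with h1 | h1
      · exact h1
      · exfalso
        rcases hPN ht hv hu huv with h3 | h3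
        · exact h2 h3
        · exact hco (l0 v, l2 t) (by rw [h1]; simp [dN]) (by rw [h3]; simp [dN])
  -- build the orientation of a triangle from a positive first edge
  have build : ∀ a b c : ℕ, ∀ t : Finset ℕ, t ∈ K → t = {a, b, c} →
      a ≠ b → a ≠ c → b ≠ c → dedges (o (S a b t)) = dP a b t →
      ({(a, b, c).1, (a, b, c).2.1, (a, b, c).2.2} : Finset ℕ) = t ∧
      (∀ q ∈ dedges (a, b, c), q.1 ∈ t ∧ q.2 ∈ t ∧ q.1 ≠ q.2) ∧
      ∀ v w, v ∈ t → w ∈ t → w ≠ v →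
        ((v, w) ∈ dedges (a, b, c) ↔ dedges (o (S v w t)) = dP v w t) := by
    intro a b c t ht hteq hab hac hbc hpab
    have ha : a ∈ t := by rw [hteq]; simp
    have hb : b ∈ t := by rw [hteq]; simp
    have hc : c ∈ t := by rw [hteq]; simp
    have hnba : ¬ dedges (o (S b a t)) = dP b a t :=
      fun hcon => (xor1 ht hb ha hab).1 hcon hpab
    have hpbc : dedges (o (S b c t)) = dP b c t := by
      by_contra hcon
      exact hnba ((xor2 ht hb ha hc hab hbc.symm hac).2 hcon)
    have hncb : ¬ dedges (o (S c b t)) = dP c b t :=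
      fun hcon => (xor1 ht hc hb hbc).1 hcon hpbc
    have hpca : dedges (o (S c a t)) = dP c a t := by
      by_contra hcon
      exact hncb ((xor2 ht hc hb ha hbc hac hab.symm).2 hcon)
    have hnac : ¬ dedges (o (S a c t)) = dP a c t :=
      (xor2 ht ha hb hc hab.symm hac.symm hbc).1 hpab
    refine ⟨by rw [hteq], ?_, ?_⟩
    · intro q hq
      rw [dedges_triple] at hq
      simp only [Finset.mem_insert, Finset.mem_singleton] at hq
      rcases hq with rfl | rfl | rfl
      · exact ⟨ha, hb, hab⟩
      · exact ⟨hb, hc, hbc⟩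
      · exact ⟨hc, ha, hac.symm⟩
    · intro v w hv hw hne
      have hv' : v ∈ ({a, b, c} : Finset ℕ) := hteq ▸ hv
      have hw' : w ∈ ({a, b, c} : Finset ℕ) := hteq ▸ hw
      simp only [Finset.mem_insert, Finset.mem_singleton] at hv' hw'
      rcases hv' with rfl | rfl | rfl <;> rcases hw' with rfl | rfl | rfl
      · exact absurd rfl hne
      · exact iff_of_true (by rw [dedges_triple]; simp) hpab
      · refine iff_of_false ?_ hnac
        rw [dedges_triple]
        simp [Prod.mk.injEq, hab, hac, hbc, hab.symm, hac.symm, hbc.symm]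
      · refine iff_of_false ?_ hnba
        rw [dedges_triple]
        simp [Prod.mk.injEq, hab, hac, hbc, hab.symm, hac.symm, hbc.symm]
      · exact absurd rfl hne
      · exact iff_of_true (by rw [dedges_triple]; simp) hpbc
      · exact iff_of_true (by rw [dedges_triple]; simp) hpca
      · refine iff_of_false ?_ hncb
        rw [dedges_triple]
        simp [Prod.mk.injEq, hab, hac, hbc, hab.symm, hac.symm, hbc.symm]
      · exact absurd rfl hne
  have hexK : ∀ t, ∃ p : ℕ × ℕ × ℕ, t ∈ K →
      ({p.1, p.2.1, p.2.2} : Finset ℕ) = t ∧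
      (∀ q ∈ dedges p, q.1 ∈ t ∧ q.2 ∈ t ∧ q.1 ≠ q.2) ∧
      ∀ v w, v ∈ t → w ∈ t → w ≠ v →
        ((v, w) ∈ dedges p ↔ dedges (o (S v w t)) = dP v w t) := by
    intro t
    by_cases ht : t ∈ K
    · obtain ⟨a, b, c, hab, hac, hbc, hteq⟩ := tri_decomp hK ht
      by_cases hpab : dedges (o (S a b t)) = dP a b t
      · exact ⟨(a, b, c), fun _ => build a b c t ht hteq hab hac hbc hpab⟩
      · have ha : a ∈ t := by rw [hteq]; simp
        have hb : b ∈ t := by rw [hteq]; simp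
        have hpba : dedges (o (S b a t)) = dP b a t := (xor1 ht hb ha hab).2 hpab
        refine ⟨(b, a, c), fun _ => build b a c t ht ?_ hab.symm hbc hac hpba⟩
        rw [hteq]
        exact Finset.insert_comm a b {c}
    · exact ⟨(0, 0, 0), fun hcon => absurd hcon ht⟩
  choose oK hoK using hexK
  refine ⟨oK, fun t ht => (hoK t ht).1, ?_⟩
  intro t₁ ht₁ t₂ ht₂ hne q hq1 hq2
  obtain ⟨q1, q2⟩ := q
  obtain ⟨hq1t, hq2t, hqne⟩ := (hoK t₁ ht₁).2.1 _ hq1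
  obtain ⟨hq1t', hq2t', _⟩ := (hoK t₂ ht₂).2.1 _ hq2
  have hp1 := ((hoK t₁ ht₁).2.2 q1 q2 hq1t hq2t hqne.symm).1 hq1
  have hp2 := ((hoK t₂ ht₂).2.2 q1 q2 hq1t' hq2t' hqne.symm).1 hq2
  have hSne : S q1 q2 t₁ ≠ S q1 q2 t₂ :=
    fun hc => hne ((S_eq hqne.symm hqne.symm).1 hc).2.2
  exact ho2 _ (S_mem_B ht₁ hq1t hq2t hqne.symm) _ (S_mem_B ht₂ hq1t' hq2t' hqne.symm) hSne
    (l0 q1, l1 {q1, q2}) (by rw [hp1]; simp [dP]) (by rw [hp2]; simp [dP])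

lemma B_vertices_lt {K : Complex} (hK : IsSurface K) :
    (vertices K).card < (vertices (B K)).card := by
  rw [vertices_B_card hK]
  have h1 : 0 < K.card := Finset.card_pos.2 hK.nonempty
  omega

lemma B_step {K : Complex} (hK : IsClosedSurface K) :
    IsClosedSurface (B K) ∧ SameSurface (B K) K ∧ (∀ R', ¬ InvTStep (B K) R') ∧
      (vertices K).card < (vertices (B K)).card :=
  ⟨B_closed hK, ⟨eulerChar_B hK.1, ⟨fun h' => orientable_of_B hK.1 h', orientable_B hK.1⟩⟩,
    B_no_invT hK.1, B_vertices_lt hK.1⟩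

end Bary

/-- every closed surface admits roots with arbitrarily many
vertices. -/
theorem infinitely_many_roots (K : Complex) (h : IsClosedSurface K) (n : ℕ) :
    ∃ R, IsClosedSurface R ∧ SameSurface R K ∧
      (∀ R', ¬ InvTStep R R') ∧ n < (vertices R).card := by
  have main : ∀ m : ℕ, ∃ R, IsClosedSurface R ∧ SameSurface R K ∧
      (∀ R', ¬ InvTStep R R') ∧ m < (vertices R).card := by
    intro m
    induction m with
    | zero =>
      obtain ⟨h1, h2, h3, h4⟩ := B_step h
      exact ⟨B K, h1, h2, h3, by omega⟩
    | succ k ih =>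
      obtain ⟨R, hR1, hR2, hR3, hR4⟩ := ih
      obtain ⟨g1, g2, g3, g4⟩ := B_step hR1
      exact ⟨B R, g1, ⟨g2.1.trans hR2.1, g2.2.trans hR2.2⟩, g3, by omega⟩
  exact main n

end Tri
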